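/- Let β be a short root of Δ and L a Lie Λ-torus of type Δ. Then supp_Λ(L) = Λ_0 = Λ_β + Λ_β, Λ = ⟨Λ_β⟩, Λ_β + 2Λ ⊆ Λ_β, and 2Λ ⊆ Λ_β; in particular 2Λ ⊆ supp_Λ(L). -/

import Mathlib

set_option linter.unusedSectionVars false

/-- `f` is a coroot functional for `α` with respect to the set `Δ`. -/
def IsCoroot {k 𝒳 : Type*} [Field k] [AddCommGroup 𝒳] [Module k 𝒳]
    (Δ : Set 𝒳) (α : 𝒳) (f : Module.Dual k 𝒳) : Prop :=
  f α = 2 ∧ ∀ β ∈ Δ, β - f β • α ∈ Δ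

/-- A finite irreducible root system (containing `0`) in `𝒳`, together with a choice of
coroot functional for each nonzero root. -/
structure RootSystemIn (k 𝒳 : Type*) [Field k] [AddCommGroup 𝒳] [Module k 𝒳] where
  Δ : Set 𝒳
  coroot : 𝒳 → Module.Dual k 𝒳
  finite : Δ.Finite
  zero_mem : (0 : 𝒳) ∈ Δ
  span_eq : Submodule.span k Δ = ⊤
  isCoroot : ∀ α ∈ Δ, α ≠ 0 → IsCoroot Δ α (coroot α)
  pairing_int : ∀ α ∈ Δ, α ≠ 0 → ∀ β ∈ Δ, ∃ z : ℤ, coroot α β = (z : k)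
  irreducible : ∀ A B : Set 𝒳, A ∪ B = Δ \ {0} → A ∩ B = ∅ →
    (∀ α ∈ A, ∀ β ∈ B, coroot β α = 0) → A = ∅ ∨ B = ∅

/-- A Lie `Λ`-torus of type `Δ`: a `Q × Λ`-graded Lie algebra (the grading being recorded
by the family `g` of subspaces indexed by `𝒳 × Λ`, supported on `Δ`) satisfying the axioms
(LT1)–(LT4). -/
structure IsLieTorus {k 𝒳 Λ L : Type*} [Field k] [AddCommGroup 𝒳] [Module k 𝒳]
    [DecidableEq 𝒳] [AddCommGroup Λ] [DecidableEq Λ] [LieRing L] [LieAlgebra k L]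
    (R : RootSystemIn k 𝒳) (g : 𝒳 → Λ → Submodule k L) : Prop where
  isInternal : DirectSum.IsInternal fun p : 𝒳 × Λ => g p.1 p.2
  bracket_mem : ∀ (α β : 𝒳) (lam mu : Λ), ∀ x ∈ g α lam, ∀ y ∈ g β mu,
    ⁅x, y⁆ ∈ g (α + β) (lam + mu)
  supp_subset : ∀ (α : 𝒳) (lam : Λ), g α lam ≠ ⊥ → α ∈ R.Δ
  lt2i : ∀ α ∈ R.Δ, α ≠ 0 → (¬ ∃ γ ∈ R.Δ, α = (2 : k) • γ) → g α 0 ≠ ⊥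
  lt2ii : ∀ (α : 𝒳) (lam : Λ), α ≠ 0 → g α lam ≠ ⊥ →
    ∃ e f : L, e ∈ g α lam ∧ f ∈ g (-α) (-lam) ∧
      g α lam = Submodule.span k {e} ∧ g (-α) (-lam) = Submodule.span k {f} ∧
      ∀ (β : 𝒳) (mu : Λ), ∀ x ∈ g β mu, ⁅⁅e, f⁆, x⁆ = R.coroot α β • x
  lt3 : LieSubalgebra.lieSpan k L
    (⋃ α ∈ R.Δ \ {0}, ⋃ lam : Λ, (g α lam : Set L)) = ⊤
  lt4 : AddSubgroup.closure {lam : Λ | ∃ α : 𝒳, g α lam ≠ ⊥} = ⊤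

namespace LT19

variable {k 𝒳 Λ L : Type*} [Field k] [CharZero k] [AddCommGroup 𝒳] [Module k 𝒳]
    [DecidableEq 𝒳] [AddCommGroup Λ] [DecidableEq Λ] [LieRing L] [LieAlgebra k L]

/-- Bundled context for Theorem 19. -/
structure Ctx (R : RootSystemIn k 𝒳) (g : 𝒳 → Λ → Submodule k L) (B : 𝒳 → 𝒳 → k)
    (β : 𝒳) : Prop where
  hLT : IsLieTorus R g
  hBsym : ∀ x y : 𝒳, B x y = B y x
  hBne : ∀ α ∈ R.Δ, α ≠ 0 → B α α ≠ 0
  hBcoroot : ∀ α ∈ R.Δ, α ≠ 0 → ∀ x : 𝒳, B α α * R.coroot α x = 2 * B x α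
  hβΔ : β ∈ R.Δ
  hβ0 : β ≠ 0
  hβshort : ∀ α ∈ R.Δ, α ≠ 0 → ∃ c : ℚ, 1 ≤ c ∧ B α α = (c : k) * B β β

variable {R : RootSystemIn k 𝒳} {g : 𝒳 → Λ → Submodule k L} {B : 𝒳 → 𝒳 → k} {β : 𝒳}

open LieAlgebra

lemma g_congr {δ δ' : 𝒳} {ν ν' : Λ} (hδ : δ = δ') (hν : ν = ν') (h : g δ ν ≠ ⊥) :
    g δ' ν' ≠ ⊥ := hδ ▸ hν ▸ h

lemma ne_bot_of_mem {δ : 𝒳} {ν : Λ} {x : L} (hx : x ∈ g δ ν) (hx0 : x ≠ 0) : g δ ν ≠ ⊥ :=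
  (Submodule.ne_bot_iff _).2 ⟨x, hx, hx0⟩

lemma iter_mem (H : Ctx R g B β) {A : 𝒳} {a : Λ} {e : L} (he : e ∈ g A a)
    {γ : 𝒳} {μ : Λ} {x : L} (hx : x ∈ g γ μ) (n : ℕ) :
    ((ad k L e) ^ n) x ∈ g (γ + n • A) (μ + n • a) := by
  induction n with
  | zero => simpa using hx
  | succ n ih =>
    have h1 : ((ad k L e) ^ (n + 1)) x = ⁅e, ((ad k L e) ^ n) x⁆ := by
      rw [pow_succ']; rfl
    have h2 := H.hLT.bracket_mem A (γ + n • A) a (μ + n • a) e he _ ih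
    rw [h1]
    have e1 : A + (γ + n • A) = γ + (n + 1) • A := by rw [succ_nsmul]; abel
    have e2 : a + (μ + n • a) = μ + (n + 1) • a := by rw [succ_nsmul]; abel
    rwa [e1, e2] at h2

lemma exists_iter_zero (H : Ctx R g B β) {A : 𝒳} (hA : A ≠ 0) {a : Λ} {e : L}
    (he : e ∈ g A a) {γ : 𝒳} {μ : Λ} {x : L} (hx : x ∈ g γ μ) :
    ∃ N : ℕ, ((ad k L e) ^ N) x = 0 := by
  have hroot : ∃ N : ℕ, γ + N • A ∉ R.Δ := by
    by_contra hcon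
    push_neg at hcon
    have hinj : Function.Injective fun n : ℕ => γ + n • A := by
      intro m n h
      simp only at h
      have h' : (m : k) • A = (n : k) • A := by
        rw [Nat.cast_smul_eq_nsmul, Nat.cast_smul_eq_nsmul]
        exact add_left_cancel h
      exact Nat.cast_injective (smul_left_injective k hA h')
    exact (Set.infinite_of_injective_forall_mem hinj hcon) R.finite
  obtain ⟨N, hN⟩ := hroot
  refine ⟨N, ?_⟩
  by_contra hz
  exact hN (H.hLT.supp_subset _ _ (ne_bot_of_mem (iter_mem H he hx N) hz))

/-- The key sl₂ commutation identity on graded pieces. -/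
lemma comm_identity (H : Ctx R g B β) {A : 𝒳} {a : Λ} {e f : L}
    (he : e ∈ g A a) (hf : f ∈ g (-A) (-a)) (c : Module.Dual k 𝒳) (hcA : c A = 2)
    (hact : ∀ (δ : 𝒳) (ν : Λ), ∀ y ∈ g δ ν, ⁅⁅e, f⁆, y⁆ = c δ • y)
    {γ : 𝒳} {μ : Λ} {x : L} (hx : x ∈ g γ μ) (j : ℕ) :
    (ad k L e) (((ad k L f) ^ (j + 1)) x) =
      ((ad k L f) ^ (j + 1)) ((ad k L e) x)
        + (((j : k) + 1) * (c γ - (j : k))) • ((ad k L f) ^ j) x := by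
  induction j with
  | zero =>
    have h1 : ((ad k L f) ^ 1) x = ⁅f, x⁆ := by simp [ad_apply]
    have h2 : (ad k L e) ⁅f, x⁆ = ⁅e, ⁅f, x⁆⁆ := by simp [ad_apply]
    have h3 : ⁅e, ⁅f, x⁆⁆ = ⁅⁅e, f⁆, x⁆ + ⁅f, ⁅e, x⁆⁆ := by
      rw [leibniz_lie]
    rw [h1, h2, h3, hact γ μ x hx]
    simp [ad_apply]
    rw [add_comm]
  | succ j ih =>
    set F := ad k L f with hF
    set E := ad k L e with hE
    have hw : (F ^ (j + 1)) x ∈ g (γ + (j + 1) • (-A)) (μ + (j + 1) • (-a)) :=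
      iter_mem H hf hx (j + 1)
    have hsucc : (F ^ (j + 2)) x = ⁅f, (F ^ (j + 1)) x⁆ := by
      rw [pow_succ']; rfl
    have h3 : ⁅e, ⁅f, (F ^ (j + 1)) x⁆⁆
        = ⁅⁅e, f⁆, (F ^ (j + 1)) x⁆ + ⁅f, ⁅e, (F ^ (j + 1)) x⁆⁆ := leibniz_lie _ _ _
    have h4 : ⁅⁅e, f⁆, (F ^ (j + 1)) x⁆ = (c γ - 2 * ((j : k) + 1)) • (F ^ (j + 1)) x := by
      rw [hact _ _ _ hw]
      congr 1
      have : c (-A) = -2 := by rw [map_neg, hcA]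
      rw [map_add, map_nsmul, this]
      push_cast
      ring
    have h5 : ⁅e, (F ^ (j + 1)) x⁆ = E ((F ^ (j + 1)) x) := by simp [hE, ad_apply]
    have h6 : E ((F ^ (j + 1)) x)
        = (F ^ (j + 1)) (E x) + (((j : k) + 1) * (c γ - (j : k))) • (F ^ j) x := ih
    have h7 : (E ((F ^ (j + 2)) x) : L) = ⁅e, ⁅f, (F ^ (j + 1)) x⁆⁆ := by
      rw [hsucc]; simp [hE, ad_apply]
    have h8 : (⁅f, (F ^ (j + 1)) (E x) + (((j : k) + 1) * (c γ - (j : k))) • (F ^ j) x⁆ : L)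
        = (F ^ (j + 2)) (E x) + (((j : k) + 1) * (c γ - (j : k))) • (F ^ (j + 1)) x := by
      rw [lie_add, lie_smul]
      congr 1
      · rw [show ((F : Module.End k L) ^ (j + 2)) (E x) = F ((F ^ (j+1)) (E x)) from by
          rw [pow_succ']; rfl]
        simp [hF, ad_apply]
      · congr 1
        rw [show ((F : Module.End k L) ^ (j + 1)) x = F ((F ^ j) x) from by
          rw [pow_succ']; rfl]
        simp [hF, ad_apply]
    rw [h7, h3, h4, h5, h6, h8]
    rw [add_comm ((c γ - 2 * ((j:k) + 1)) • (F ^ (j + 1)) x) _, add_assoc, ← add_smul]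
    congr 1
    push_cast
    ring

/-- Primitive vector case of the sl₂ engine. -/
lemma primitive (H : Ctx R g B β) {A : 𝒳} (hA : A ≠ 0) {a : Λ} {e f : L}
    (he : e ∈ g A a) (hf : f ∈ g (-A) (-a)) (c : Module.Dual k 𝒳) (hcA : c A = 2)
    (hact : ∀ (δ : 𝒳) (ν : Λ), ∀ y ∈ g δ ν, ⁅⁅e, f⁆, y⁆ = c δ • y)
    {γ : 𝒳} {μ : Λ} {x : L} (hx : x ∈ g γ μ) (hx0 : x ≠ 0)
    (hprim : (ad k L e) x = 0) {n : ℕ} (hn : c γ = (n : k)) :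
    ((ad k L f) ^ n) x ≠ 0 := by
  classical
  have hAneg : (-A : 𝒳) ≠ 0 := neg_ne_zero.2 hA
  obtain ⟨N, hN⟩ := exists_iter_zero H hAneg hf hx
  have hex : ∃ j : ℕ, ((ad k L f) ^ j) x = 0 := ⟨N, hN⟩
  have hM0 : ((ad k L f) ^ (Nat.find hex)) x = 0 := Nat.find_spec hex
  have hMpos : 0 < Nat.find hex := by
    rcases Nat.eq_zero_or_pos (Nat.find hex) with h | h
    · exfalso; apply hx0; simpa [h] using hM0
    · exact h
  obtain ⟨m, hm⟩ : ∃ m, Nat.find hex = m + 1 :=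
    ⟨Nat.find hex - 1, (Nat.succ_pred_eq_of_pos hMpos).symm⟩
  rw [hm] at hM0
  have hMm : ((ad k L f) ^ m) x ≠ 0 := Nat.find_min hex (by omega)
  have hid := comm_identity H he hf c hcA hact hx m
  rw [hM0, map_zero] at hid
  have hEx : ((ad k L f) ^ (m + 1)) ((ad k L e) x) = 0 := by rw [hprim, map_zero]
  rw [hEx, zero_add] at hid
  have hco : ((m : k) + 1) * (c γ - (m : k)) = 0 := by
    by_contra hco
    exact hMm ((smul_eq_zero.1 hid.symm).resolve_left hco)
  have hm1 : ((m : k) + 1) ≠ 0 := by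
    have : ((m + 1 : ℕ) : k) ≠ 0 := Nat.cast_ne_zero.2 (Nat.succ_ne_zero m)
    simpa [Nat.cast_add] using this
  have hcγ : c γ = (m : k) := by
    rcases mul_eq_zero.1 hco with h | h
    · exact absurd h hm1
    · exact sub_eq_zero.1 h
  have hnm : n = m := by
    have : ((n : ℕ) : k) = ((m : ℕ) : k) := by rw [← hn, hcγ]
    exact_mod_cast this
  rw [hnm]; exact hMm

lemma engineAux (H : Ctx R g B β) {A : 𝒳} (hA : A ≠ 0) {a : Λ} {e f : L}
    (he : e ∈ g A a) (hf : f ∈ g (-A) (-a)) (c : Module.Dual k 𝒳) (hcA : c A = 2)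
    (hact : ∀ (δ : 𝒳) (ν : Λ), ∀ y ∈ g δ ν, ⁅⁅e, f⁆, y⁆ = c δ • y) (m : ℕ) :
    ∀ (γ : 𝒳) (μ : Λ) (x : L) (n : ℕ), x ∈ g γ μ → x ≠ 0 →
      ((ad k L e) ^ (m + 1)) x = 0 → c γ = (n : k) → ((ad k L f) ^ n) x ≠ 0 := by
  induction m with
  | zero =>
    intro γ μ x n hx hx0 hE hn
    exact primitive H hA he hf c hcA hact hx hx0 (by simpa using hE) hn
  | succ m ih =>
    intro γ μ x n hx hx0 hE hn
    by_cases hEx : (ad k L e) x = 0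
    · exact primitive H hA he hf c hcA hact hx hx0 hEx hn
    · have hu : (ad k L e) x ∈ g (A + γ) (a + μ) := by
        have := H.hLT.bracket_mem A γ a μ e he x hx
        simpa [ad_apply] using this
      have hupow : ((ad k L e) ^ (m + 1)) ((ad k L e) x) = 0 := by
        have h2 : ((ad k L e) ^ (m + 1 + 1)) x = ((ad k L e) ^ (m + 1)) ((ad k L e) x) := by
          rw [pow_succ]; rfl
        rw [← h2]; exact hE
      have hcu : c (A + γ) = ((n + 2 : ℕ) : k) := by
        rw [map_add, hcA, hn]; push_cast; ring
      have hFu := ih (A + γ) (a + μ) ((ad k L e) x) (n + 2) hu hEx hupow hcu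
      intro hFn
      apply hFu
      have hFn1 : ((ad k L f) ^ (n + 1)) x = 0 := by
        rw [Nat.add_comm, pow_add, pow_one]
        show ((ad k L f) ^ 1) (((ad k L f) ^ n) x) = 0
        rw [hFn, map_zero]
      have hFn2 : ((ad k L f) ^ (n + 2)) x = 0 := by
        rw [Nat.add_comm, pow_add]
        show ((ad k L f) ^ 2) (((ad k L f) ^ n) x) = 0
        rw [hFn, map_zero]
      have hid := comm_identity H he hf c hcA hact hx (n + 1)
      rw [show n + 1 + 1 = n + 2 from rfl] at hid
      rw [hFn2, map_zero, hFn1, smul_zero, add_zero] at hid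
      exact hid.symm

/-- The sl₂ engine: a nonzero vector of weight `n ≥ 0` survives `n` applications of `f`. -/
lemma engine (H : Ctx R g B β) {A : 𝒳} (hA : A ≠ 0) {a : Λ} {e f : L}
    (he : e ∈ g A a) (hf : f ∈ g (-A) (-a)) (c : Module.Dual k 𝒳) (hcA : c A = 2)
    (hact : ∀ (δ : 𝒳) (ν : Λ), ∀ y ∈ g δ ν, ⁅⁅e, f⁆, y⁆ = c δ • y)
    {γ : 𝒳} {μ : Λ} {x : L} (hx : x ∈ g γ μ) (hx0 : x ≠ 0)
    {n : ℕ} (hn : c γ = (n : k)) :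
    ((ad k L f) ^ n) x ≠ 0 := by
  obtain ⟨N, hN⟩ := exists_iter_zero H hA he hx
  rcases Nat.eq_zero_or_pos N with h | h
  · exfalso; apply hx0; simpa [h] using hN
  obtain ⟨m, rfl⟩ : ∃ m, N = m + 1 := ⟨N - 1, (Nat.succ_pred_eq_of_pos h).symm⟩
  exact engineAux H hA he hf c hcA hact m γ μ x n hx hx0 hN hn

lemma rootOf (H : Ctx R g B β) {α : 𝒳} {lam : Λ} (hS : g α lam ≠ ⊥) : α ∈ R.Δ :=
  H.hLT.supp_subset α lam hS

lemma coroot_self (H : Ctx R g B β) {α : 𝒳} (hαΔ : α ∈ R.Δ) (hα0 : α ≠ 0) :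
    R.coroot α α = 2 := (R.isCoroot α hαΔ hα0).1

lemma moveDownFull (H : Ctx R g B β) {α : 𝒳} {lam : Λ} (hα0 : α ≠ 0) (hS : g α lam ≠ ⊥)
    {γ : 𝒳} {μ : Λ} {x : L} (hx : x ∈ g γ μ) (hx0 : x ≠ 0)
    {n : ℕ} (hn : R.coroot α γ = (n : k)) :
    g (γ + n • (-α)) (μ + n • (-lam)) ≠ ⊥ := by
  obtain ⟨e, f, he, hf, -, -, hact⟩ := H.hLT.lt2ii α lam hα0 hS
  have hcA := coroot_self H (rootOf H hS) hα0
  have hne := engine H hα0 he hf (R.coroot α) hcA (fun δ ν y hy => hact δ ν y hy) hx hx0 hn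
  exact ne_bot_of_mem (iter_mem H hf hx n) hne

lemma moveDownOne (H : Ctx R g B β) {α : 𝒳} {lam : Λ} (hα0 : α ≠ 0) (hS : g α lam ≠ ⊥)
    {γ : 𝒳} {μ : Λ} {x : L} (hx : x ∈ g γ μ) (hx0 : x ≠ 0)
    {n : ℕ} (hn : R.coroot α γ = (n : k)) (hn1 : 1 ≤ n) :
    g ((-α) + γ) ((-lam) + μ) ≠ ⊥ := by
  obtain ⟨e, f, he, hf, -, -, hact⟩ := H.hLT.lt2ii α lam hα0 hS
  have hcA := coroot_self H (rootOf H hS) hα0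
  have hne := engine H hα0 he hf (R.coroot α) hcA (fun δ ν y hy => hact δ ν y hy) hx hx0 hn
  have hfx : (⁅f, x⁆ : L) ∈ g ((-α) + γ) ((-lam) + μ) :=
    H.hLT.bracket_mem (-α) γ (-lam) μ f hf x hx
  refine ne_bot_of_mem hfx (fun h0 => hne ?_)
  obtain ⟨m, rfl⟩ : ∃ m, n = m + 1 := ⟨n - 1, by omega⟩
  calc ((ad k L f) ^ (m + 1)) x = ((ad k L f) ^ m) ((ad k L f) x) := by rw [pow_succ]; rfl
  _ = 0 := by
      have : (ad k L f) x = ⁅f, x⁆ := rfl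
      rw [this, h0, map_zero]

lemma flip_act {e f : L} {α : 𝒳}
    (hact : ∀ (δ : 𝒳) (ν : Λ), ∀ y ∈ g δ ν, ⁅⁅e, f⁆, y⁆ = R.coroot α δ • y) :
    ∀ (δ : 𝒳) (ν : Λ), ∀ y ∈ g δ ν, ⁅⁅f, e⁆, y⁆ = (-(R.coroot α)) δ • y := by
  intro δ ν y hy
  have h1 : (⁅f, e⁆ : L) = -⁅e, f⁆ := by rw [← lie_skew f e]
  rw [h1, neg_lie, hact δ ν y hy, LinearMap.neg_apply, neg_smul]

lemma moveUpFull (H : Ctx R g B β) {α : 𝒳} {lam : Λ} (hα0 : α ≠ 0) (hS : g α lam ≠ ⊥)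
    {γ : 𝒳} {μ : Λ} {x : L} (hx : x ∈ g γ μ) (hx0 : x ≠ 0)
    {n : ℕ} (hn : R.coroot α γ = -(n : k)) :
    g (γ + n • α) (μ + n • lam) ≠ ⊥ := by
  obtain ⟨e, f, he, hf, -, -, hact⟩ := H.hLT.lt2ii α lam hα0 hS
  have hcA := coroot_self H (rootOf H hS) hα0
  have he' : e ∈ g (-(-α)) (-(-lam)) := by rw [neg_neg, neg_neg]; exact he
  have hcA' : (-(R.coroot α)) (-α) = 2 := by
    rw [LinearMap.neg_apply, map_neg, hcA]; ring
  have hn' : (-(R.coroot α)) γ = (n : k) := by rw [LinearMap.neg_apply, hn]; ring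
  have hne := engine H (neg_ne_zero.2 hα0) hf he' (-(R.coroot α)) hcA'
    (flip_act (fun δ ν y hy => hact δ ν y hy)) hx hx0 hn'
  exact ne_bot_of_mem (iter_mem H he hx n) hne

lemma moveUpOne (H : Ctx R g B β) {α : 𝒳} {lam : Λ} (hα0 : α ≠ 0) (hS : g α lam ≠ ⊥)
    {γ : 𝒳} {μ : Λ} {x : L} (hx : x ∈ g γ μ) (hx0 : x ≠ 0)
    {n : ℕ} (hn : R.coroot α γ = -(n : k)) (hn1 : 1 ≤ n) :
    g (α + γ) (lam + μ) ≠ ⊥ := by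
  obtain ⟨e, f, he, hf, -, -, hact⟩ := H.hLT.lt2ii α lam hα0 hS
  have hcA := coroot_self H (rootOf H hS) hα0
  have he' : e ∈ g (-(-α)) (-(-lam)) := by rw [neg_neg, neg_neg]; exact he
  have hcA' : (-(R.coroot α)) (-α) = 2 := by
    rw [LinearMap.neg_apply, map_neg, hcA]; ring
  have hn' : (-(R.coroot α)) γ = (n : k) := by rw [LinearMap.neg_apply, hn]; ring
  have hne := engine H (neg_ne_zero.2 hα0) hf he' (-(R.coroot α)) hcA'
    (flip_act (fun δ ν y hy => hact δ ν y hy)) hx hx0 hn'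
  have hfx : (⁅e, x⁆ : L) ∈ g (α + γ) (lam + μ) :=
    H.hLT.bracket_mem α γ lam μ e he x hx
  refine ne_bot_of_mem hfx (fun h0 => hne ?_)
  obtain ⟨m, rfl⟩ : ∃ m, n = m + 1 := ⟨n - 1, by omega⟩
  calc ((ad k L e) ^ (m + 1)) x = ((ad k L e) ^ m) ((ad k L e) x) := by rw [pow_succ]; rfl
  _ = 0 := by
      have : (ad k L e) x = ⁅e, x⁆ := rfl
      rw [this, h0, map_zero]

lemma neg_mem (H : Ctx R g B β) {α : 𝒳} {lam : Λ} (hα0 : α ≠ 0) (hS : g α lam ≠ ⊥) :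
    g (-α) (-lam) ≠ ⊥ := by
  obtain ⟨e, f, he, hf, hspan, -, hact⟩ := H.hLT.lt2ii α lam hα0 hS
  have he0 : e ≠ 0 := by
    rintro rfl
    apply hS
    rw [hspan, Submodule.span_singleton_eq_bot.2 rfl]
  intro hbot
  have hf0 : f = 0 := by
    have := hf
    rw [hbot] at this
    simpa using this
  have h2 := hact α lam e he
  rw [hf0] at h2
  simp only [lie_zero, zero_lie] at h2
  rw [coroot_self H (rootOf H hS) hα0] at h2
  exact he0 (by
    have := h2.symm
    have h3 : (2 : k) • e = 0 := this
    exact (smul_eq_zero.1 h3).resolve_left two_ne_zero)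

/-- The symmetry identity `B γ γ ⟨δ, γ∨⟩ = B δ δ ⟨γ, δ∨⟩`. -/
lemma star (H : Ctx R g B β) {γ δ : 𝒳} (hγΔ : γ ∈ R.Δ) (hγ0 : γ ≠ 0)
    (hδΔ : δ ∈ R.Δ) (hδ0 : δ ≠ 0) :
    B γ γ * R.coroot γ δ = B δ δ * R.coroot δ γ := by
  rw [H.hBcoroot γ hγΔ hγ0 δ, H.hBcoroot δ hδΔ hδ0 γ, H.hBsym δ γ]

lemma reflMem (H : Ctx R g B β) {γ a : 𝒳} (hγΔ : γ ∈ R.Δ) (haΔ : a ∈ R.Δ) (ha0 : a ≠ 0) :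
    γ - R.coroot a γ • a ∈ R.Δ := (R.isCoroot a haΔ ha0).2 γ hγΔ

lemma reflRefl (H : Ctx R g B β) {a : 𝒳} (haΔ : a ∈ R.Δ) (ha0 : a ≠ 0) (x : 𝒳) :
    (x - R.coroot a x • a) - R.coroot a (x - R.coroot a x • a) • a = x := by
  have h2 := coroot_self H haΔ ha0
  have h3 : R.coroot a (x - R.coroot a x • a) = - R.coroot a x := by
    rw [map_sub, map_smul, h2, smul_eq_mul]; ring
  rw [h3, neg_smul]
  abel

lemma reflNe0 (H : Ctx R g B β) {γ a : 𝒳} (hγ0 : γ ≠ 0) (haΔ : a ∈ R.Δ) (ha0 : a ≠ 0) :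
    γ - R.coroot a γ • a ≠ 0 := by
  intro h
  apply hγ0
  have := reflRefl H haΔ ha0 γ
  rw [h] at this
  simpa using this.symm

lemma negRootMem (H : Ctx R g B β) {a : 𝒳} (haΔ : a ∈ R.Δ) (ha0 : a ≠ 0) : -a ∈ R.Δ := by
  have := reflMem H haΔ haΔ ha0
  rw [coroot_self H haΔ ha0, two_smul] at this
  rwa [show a - (a + a) = -a from by abel] at this

/-- Uniqueness of the coroot functional. -/
lemma coroot_unique (H : Ctx R g B β) {a : 𝒳} (haΔ : a ∈ R.Δ) (ha0 : a ≠ 0)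
    (G : Module.Dual k 𝒳) (hG2 : G a = 2) (hGmaps : ∀ x ∈ R.Δ, x - G x • a ∈ R.Δ) :
    R.coroot a = G := by
  refine Module.Dual.eq_of_preReflection_mapsTo R.finite R.span_eq
    (coroot_self H haΔ ha0) ?_ hG2 ?_
  · intro x hx
    rw [Module.preReflection_apply]
    exact (R.isCoroot a haΔ ha0).2 x hx
  · intro x hx
    rw [Module.preReflection_apply]
    exact hGmaps x hx

/-- The coroot of a reflected root. -/
lemma corootRefl (H : Ctx R g B β) {γ a : 𝒳} (hγΔ : γ ∈ R.Δ) (hγ0 : γ ≠ 0)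
    (haΔ : a ∈ R.Δ) (ha0 : a ≠ 0) (x : 𝒳) :
    R.coroot (γ - R.coroot a γ • a) x = R.coroot γ (x - R.coroot a x • a) := by
  set δ := γ - R.coroot a γ • a with hδ
  have hδΔ : δ ∈ R.Δ := reflMem H hγΔ haΔ ha0
  have hδ0 : δ ≠ 0 := reflNe0 H hγ0 haΔ ha0
  have hG : R.coroot δ = (R.coroot γ).comp (Module.preReflection a (R.coroot a)) := by
    apply coroot_unique H hδΔ hδ0
    · rw [LinearMap.comp_apply, Module.preReflection_apply]
      rw [hδ, reflRefl H haΔ ha0 γ, coroot_self H hγΔ hγ0]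
    · intro x hx
      set c := R.coroot γ (x - R.coroot a x • a) with hc
      have key : x - ((R.coroot γ).comp (Module.preReflection a (R.coroot a))) x • δ
          = ((x - R.coroot a x • a) - c • γ)
            - R.coroot a ((x - R.coroot a x • a) - c • γ) • a := by
        rw [LinearMap.comp_apply, Module.preReflection_apply, ← hc, hδ]
        have h2 := coroot_self H haΔ ha0
        rw [map_sub, map_sub, map_smul, map_smul, h2]
        simp only [smul_eq_mul, sub_smul, smul_sub, smul_smul]
        module
      rw [key]
      exact reflMem H (reflMem H (reflMem H hx haΔ ha0) hγΔ hγ0) haΔ ha0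
  rw [hG, LinearMap.comp_apply, Module.preReflection_apply]

/-- Reflections preserve `B`-length of roots. -/
lemma lenRefl (H : Ctx R g B β) {γ a : 𝒳} (hγΔ : γ ∈ R.Δ) (hγ0 : γ ≠ 0)
    (haΔ : a ∈ R.Δ) (ha0 : a ≠ 0) :
    B (γ - R.coroot a γ • a) (γ - R.coroot a γ • a) = B γ γ := by
  set δ := γ - R.coroot a γ • a with hδ
  have hδΔ : δ ∈ R.Δ := reflMem H hγΔ haΔ ha0
  have hδ0 : δ ≠ 0 := reflNe0 H hγ0 haΔ ha0
  by_cases hc : R.coroot γ a = 0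
  · have hac : R.coroot a γ = 0 := by
      have hstar := star H hγΔ hγ0 haΔ ha0
      rw [hc, mul_zero] at hstar
      exact (mul_eq_zero.1 hstar.symm).resolve_left (H.hBne a haΔ ha0)
    rw [hδ, hac]
    simp
  · have h1 : R.coroot δ a = -(R.coroot γ a) := by
      rw [corootRefl H hγΔ hγ0 haΔ ha0 a, coroot_self H haΔ ha0, two_smul]
      rw [show a - (a + a) = -a from by abel, map_neg]
    have h2 : R.coroot a δ = -(R.coroot a γ) := by
      rw [hδ, map_sub, map_smul, coroot_self H haΔ ha0]
      simp only [smul_eq_mul]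
      ring
    have hstar1 := star H hδΔ hδ0 haΔ ha0
    have hstar2 := star H hγΔ hγ0 haΔ ha0
    rw [h1, h2] at hstar1
    have : B δ δ * R.coroot γ a = B γ γ * R.coroot γ a := by
      have := hstar1
      rw [mul_neg, mul_neg, neg_eq_iff_eq_neg, neg_neg] at this
      rw [this, ← hstar2]
    exact mul_right_cancel₀ hc this

lemma ratEq (H : Ctx R g B β) {q r : ℚ} (h : (q : k) * B β β = (r : k) * B β β) : q = r := by
  have := mul_right_cancel₀ (H.hBne β H.hβΔ H.hβ0) h
  exact_mod_cast this

/-- A root `γ` of minimal length is indivisible. -/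
lemma short_indiv (H : Ctx R g B β) {γ : 𝒳} (hγΔ : γ ∈ R.Δ) (hγ0 : γ ≠ 0)
    (hγB : B γ γ = B β β) : ¬ ∃ ρ ∈ R.Δ, γ = (2 : k) • ρ := by
  rintro ⟨ρ, hρΔ, hρeq⟩
  have hρ0 : ρ ≠ 0 := by rintro rfl; apply hγ0; simpa using hρeq
  have hcρ1 : R.coroot γ ρ = 1 := by
    have hh : R.coroot γ γ = (2 : k) * R.coroot γ ρ := by
      rw [congrArg (R.coroot γ) hρeq, map_smul, smul_eq_mul]
    have h2 : (2 : k) * R.coroot γ ρ = 2 * 1 := by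
      rw [← hh, coroot_self H hγΔ hγ0, mul_one]
    exact mul_left_cancel₀ two_ne_zero h2
  have hcργ : R.coroot ρ γ = 4 := by
    rw [hρeq, map_smul, smul_eq_mul, coroot_self H hρΔ hρ0]; ring
  have hstar := star H hγΔ hγ0 hρΔ hρ0
  rw [hcρ1, hcργ, mul_one] at hstar
  obtain ⟨c, hc1, hcB⟩ := H.hβshort ρ hρΔ hρ0
  rw [hγB, hcB] at hstar
  have h14 : (1 : ℚ) = 4 * c := by
    apply ratEq H
    rw [Rat.cast_one, one_mul]
    conv_lhs => rw [hstar]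
    push_cast
    ring
  linarith

lemma short_zero_mem (H : Ctx R g B β) {γ : 𝒳} (hγΔ : γ ∈ R.Δ) (hγ0 : γ ≠ 0)
    (hγB : B γ γ = B β β) : g γ 0 ≠ ⊥ :=
  H.hLT.lt2i γ hγΔ hγ0 (short_indiv H hγΔ hγ0 hγB)

lemma indivAux (H : Ctx R g B β) (n : ℕ) :
    ∀ a, a ∈ R.Δ → a ≠ 0 → ∀ c : ℚ, 1 ≤ c → B a a = (c : k) * B β β → c < 4 ^ n →
    ∃ a', a' ∈ R.Δ ∧ a' ≠ 0 ∧ (¬ ∃ ρ ∈ R.Δ, a' = (2 : k) • ρ) ∧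
      ∀ x, x - R.coroot a' x • a' = x - R.coroot a x • a := by
  induction n with
  | zero =>
    intro a _ _ c hc1 _ hlt
    exfalso
    rw [pow_zero] at hlt
    linarith
  | succ n ih =>
    intro a haΔ ha0 c hc1 hcB hlt
    by_cases hdiv : ∃ ρ ∈ R.Δ, a = (2 : k) • ρ
    · obtain ⟨ρ, hρΔ, hρeq⟩ := hdiv
      have hρ0 : ρ ≠ 0 := by rintro rfl; apply ha0; simpa using hρeq
      have hcaρ : R.coroot a ρ = 1 := by
        have hh : R.coroot a a = (2 : k) * R.coroot a ρ := by
          rw [congrArg (R.coroot a) hρeq, map_smul, smul_eq_mul]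
        have h2 : (2 : k) * R.coroot a ρ = 2 * 1 := by
          rw [← hh, coroot_self H haΔ ha0, mul_one]
        exact mul_left_cancel₀ two_ne_zero h2
      have hGa : R.coroot ρ = (2 : k) • R.coroot a := by
        apply coroot_unique H hρΔ hρ0
        · rw [LinearMap.smul_apply, smul_eq_mul, hcaρ, mul_one]
        · intro x hx
          have hkey : x - ((2 : k) • R.coroot a) x • ρ = x - R.coroot a x • a := by
            rw [LinearMap.smul_apply, smul_eq_mul, congrArg (fun t => R.coroot a x • t) hρeq]
            rw [smul_smul, mul_comm]
          rw [hkey]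
          exact reflMem H hx haΔ ha0
      have hrefl : ∀ x, x - R.coroot ρ x • ρ = x - R.coroot a x • a := by
        intro x
        rw [hGa, LinearMap.smul_apply, smul_eq_mul, congrArg (fun t => R.coroot a x • t) hρeq]
        rw [smul_smul, mul_comm]
      have hcρa : R.coroot ρ a = 4 := by
        rw [hGa, LinearMap.smul_apply, smul_eq_mul, coroot_self H haΔ ha0]; norm_num
      have hstar := star H hρΔ hρ0 haΔ ha0
      rw [hcρa, hcaρ, mul_one] at hstar
      obtain ⟨c', hc'1, hc'B⟩ := H.hβshort ρ hρΔ hρ0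
      have hc4 : (4 * c' : ℚ) = c := by
        apply ratEq H
        push_cast
        rw [show ((4 : k) * (c' : k)) * B β β = 4 * ((c' : k) * B β β) from by ring]
        rw [← hc'B]
        rw [show (4 : k) * B ρ ρ = B ρ ρ * 4 from by ring, hstar, hcB]
      have hc'lt : c' < 4 ^ n := by
        rw [pow_succ] at hlt
        linarith
      obtain ⟨a', ha'Δ, ha'0, ha'ind, ha'refl⟩ := ih ρ hρΔ hρ0 c' hc'1 hc'B hc'lt
      exact ⟨a', ha'Δ, ha'0, ha'ind, fun x => (ha'refl x).trans (hrefl x)⟩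
    · exact ⟨a, haΔ, ha0, hdiv, fun x => rfl⟩

lemma indiv (H : Ctx R g B β) {a : 𝒳} (haΔ : a ∈ R.Δ) (ha0 : a ≠ 0) :
    ∃ a', a' ∈ R.Δ ∧ a' ≠ 0 ∧ (¬ ∃ ρ ∈ R.Δ, a' = (2 : k) • ρ) ∧
      ∀ x, x - R.coroot a' x • a' = x - R.coroot a x • a := by
  obtain ⟨c, hc1, hcB⟩ := H.hβshort a haΔ ha0
  obtain ⟨n, hn⟩ := pow_unbounded_of_one_lt c (by norm_num : (1 : ℚ) < 4)
  exact indivAux H n a haΔ ha0 c hc1 hcB hn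

/-- Weyl reflections (in arbitrary roots) preserve `Λ`-support fibers. -/
lemma weyl (H : Ctx R g B β) {a : 𝒳} (haΔ : a ∈ R.Δ) (ha0 : a ≠ 0)
    {γ : 𝒳} {μ : Λ} (hS : g γ μ ≠ ⊥) :
    g (γ - R.coroot a γ • a) μ ≠ ⊥ := by
  have hγΔ : γ ∈ R.Δ := rootOf H hS
  obtain ⟨a', ha'Δ, ha'0, ha'ind, ha'refl⟩ := indiv H haΔ ha0
  have hS0 : g a' 0 ≠ ⊥ := H.hLT.lt2i a' ha'Δ ha'0 ha'ind
  obtain ⟨x, hx, hx0⟩ := (Submodule.ne_bot_iff _).1 hS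
  obtain ⟨z, hz⟩ := R.pairing_int a' ha'Δ ha'0 γ hγΔ
  rcases z.eq_nat_or_neg with ⟨n, hn | hn⟩
  · have hn' : R.coroot a' γ = (n : k) := by rw [hz, hn]; push_cast; ring
    have h := moveDownFull H ha'0 hS0 hx hx0 hn'
    refine g_congr ?_ ?_ h
    · rw [← ha'refl γ, hn', Nat.cast_smul_eq_nsmul, smul_neg, ← sub_eq_add_neg]
    · simp
  · have hn' : R.coroot a' γ = -(n : k) := by rw [hz, hn]; push_cast; ring
    have h := moveUpFull H ha'0 hS0 hx hx0 hn'
    refine g_congr ?_ ?_ h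
    · rw [← ha'refl γ, hn', neg_smul, sub_neg_eq_add, Nat.cast_smul_eq_nsmul]
    · simp

lemma negSelf (H : Ctx R g B β) {γ : 𝒳} {μ : Λ} (hγ0 : γ ≠ 0) (hS : g γ μ ≠ ⊥) :
    g (-γ) μ ≠ ⊥ := by
  have hγΔ := rootOf H hS
  have h := weyl H hγΔ hγ0 hS
  refine g_congr ?_ rfl h
  rw [coroot_self H hγΔ hγ0, two_smul]; abel

lemma lamNeg (H : Ctx R g B β) {lam : Λ} (hS : g β lam ≠ ⊥) : g β (-lam) ≠ ⊥ := by
  have h1 := negSelf H H.hβ0 hS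
  have h2 := neg_mem H (neg_ne_zero.2 H.hβ0) h1
  exact g_congr (neg_neg β) rfl h2

/-- Single reflection steps generating the orbit of `β`. -/
def rstep (R : RootSystemIn k 𝒳) : 𝒳 → 𝒳 → Prop :=
  fun x y => ∃ a, a ∈ R.Δ ∧ a ≠ 0 ∧ y = x - R.coroot a x • a

lemma orbit_props (H : Ctx R g B β) {o : 𝒳} (ho : Relation.ReflTransGen (rstep R) β o) :
    o ∈ R.Δ ∧ o ≠ 0 ∧ B o o = B β β := by
  induction ho with
  | refl => exact ⟨H.hβΔ, H.hβ0, rfl⟩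
  | tail hxy hstep ih =>
    obtain ⟨hΔ, h0, hB⟩ := ih
    obtain ⟨a, haΔ, ha0, rfl⟩ := hstep
    exact ⟨reflMem H hΔ haΔ ha0, reflNe0 H h0 haΔ ha0,
      by rw [lenRefl H hΔ h0 haΔ ha0, hB]⟩

lemma orbit_back (H : Ctx R g B β) {o : 𝒳} (ho : Relation.ReflTransGen (rstep R) β o) :
    ∀ μ : Λ, g o μ ≠ ⊥ → g β μ ≠ ⊥ := by
  induction ho with
  | refl => exact fun μ h => h
  | tail hbx hstep ih =>
    obtain ⟨a, haΔ, ha0, rfl⟩ := hstep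
    intro μ hS
    apply ih μ
    have h := weyl H haΔ ha0 hS
    exact g_congr (reflRefl H haΔ ha0 _) rfl h

lemma nonorth (H : Ctx R g B β) {ξ : 𝒳} (hξΔ : ξ ∈ R.Δ) (hξ0 : ξ ≠ 0) :
    ∃ o, Relation.ReflTransGen (rstep R) β o ∧ R.coroot ξ o ≠ 0 := by
  by_contra hcon
  push_neg at hcon
  set As : Set 𝒳 := {γ : 𝒳 | γ ∈ R.Δ ∧ γ ≠ 0 ∧
      ¬ ∀ o, Relation.ReflTransGen (rstep R) β o → R.coroot γ o = 0} with hAs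
  set Bs : Set 𝒳 := {γ : 𝒳 | γ ∈ R.Δ ∧ γ ≠ 0 ∧
      ∀ o, Relation.ReflTransGen (rstep R) β o → R.coroot γ o = 0} with hBs
  have hξB : ξ ∈ Bs := ⟨hξΔ, hξ0, hcon⟩
  have h1 : As ∪ Bs = R.Δ \ {0} := by
    ext γ
    simp only [hAs, hBs, Set.mem_union, Set.mem_setOf_eq, Set.mem_diff,
      Set.mem_singleton_iff]
    by_cases h3 : ∀ o, Relation.ReflTransGen (rstep R) β o → R.coroot γ o = 0
    · tauto
    · tauto
  have h2 : As ∩ Bs = ∅ := by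
    ext γ
    simp only [hAs, hBs, Set.mem_inter_iff, Set.mem_setOf_eq, Set.mem_empty_iff_false,
      iff_false]
    rintro ⟨⟨-, -, h3⟩, ⟨-, -, h4⟩⟩
    exact h3 h4
  have h3 : ∀ p ∈ As, ∀ q ∈ Bs, R.coroot q p = 0 := by
    rintro p ⟨hpΔ, hp0, hpn⟩ q ⟨hqΔ, hq0, hq⟩
    by_contra hne
    push_neg at hpn
    obtain ⟨o, ho, hpo⟩ := hpn
    have ho' : Relation.ReflTransGen (rstep R) β (o - R.coroot p o • p) :=
      ho.tail ⟨p, hpΔ, hp0, rfl⟩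
    have h5 := hq _ ho'
    rw [map_sub, map_smul, smul_eq_mul, hq o ho, zero_sub, neg_eq_zero] at h5
    rcases mul_eq_zero.1 h5 with h | h
    · exact hpo h
    · exact hne h
  rcases R.irreducible As Bs h1 h2 h3 with hA | hB
  · apply (Set.eq_empty_iff_forall_notMem.1 hA β)
    refine ⟨H.hβΔ, H.hβ0, fun hall => ?_⟩
    have h4 := hall β Relation.ReflTransGen.refl
    rw [coroot_self H H.hβΔ H.hβ0] at h4
    exact two_ne_zero h4
  · exact (Set.eq_empty_iff_forall_notMem.1 hB ξ) hξB

lemma lenNeg (H : Ctx R g B β) {α : 𝒳} (hαΔ : α ∈ R.Δ) (hα0 : α ≠ 0) :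
    B (-α) (-α) = B α α := by
  have h := lenRefl H hαΔ hα0 hαΔ hα0
  rw [coroot_self H hαΔ hα0, two_smul, show α - (α + α) = -α from by abel] at h
  exact h

/-- From any root carrying `lam` we can reach a minimal-length root carrying `lam`. -/
lemma toShort (H : Ctx R g B β) {α : 𝒳} {lam : Λ} (hα0 : α ≠ 0) (hS : g α lam ≠ ⊥) :
    ∃ s, s ∈ R.Δ ∧ s ≠ 0 ∧ B s s = B β β ∧ g s lam ≠ ⊥ := by
  have hαΔ := rootOf H hS
  by_cases hshort : B α α = B β β
  · exact ⟨α, hαΔ, hα0, hshort, hS⟩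
  obtain ⟨o, ho, hno⟩ := nonorth H hαΔ hα0
  obtain ⟨hoΔ, ho0, hoB⟩ := orbit_props H ho
  obtain ⟨z, hz⟩ := R.pairing_int α hαΔ hα0 o hoΔ
  have hz0 : z ≠ 0 := by
    rintro rfl; apply hno; rw [hz]; norm_num
  have key : ∃ o₁, Relation.ReflTransGen (rstep R) β o₁ ∧
      ∃ z₁ : ℤ, R.coroot α o₁ = (z₁ : k) ∧ z₁ < 0 := by
    rcases lt_or_gt_of_ne hz0 with hneg | hpos
    · exact ⟨o, ho, z, hz, hneg⟩
    · refine ⟨o - R.coroot o o • o, ho.tail ⟨o, hoΔ, ho0, rfl⟩, -z, ?_, by omega⟩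
      rw [map_sub, map_smul, smul_eq_mul, coroot_self H hoΔ ho0, hz]
      push_cast; ring
  obtain ⟨o₁, ho₁, z₁, hz₁, hzneg⟩ := key
  obtain ⟨hoΔ₁, ho0₁, hoB₁⟩ := orbit_props H ho₁
  obtain ⟨x, hx, hx0⟩ := (Submodule.ne_bot_iff _).1 (short_zero_mem H hoΔ₁ ho0₁ hoB₁)
  have hcor : R.coroot α o₁ = -(((-z₁).toNat : ℕ) : k) := by
    rw [hz₁]
    have h1 : ((-z₁).toNat : ℤ) = -z₁ := Int.toNat_of_nonneg (by omega)
    have h2 : (((-z₁).toNat : ℕ) : k) = ((-z₁ : ℤ) : k) := by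
      exact_mod_cast congrArg (fun w : ℤ => (w : k)) h1
    rw [h2]; push_cast; ring
  have hn1 : 1 ≤ (-z₁).toNat := by omega
  have hup := moveUpOne H hα0 hS hx hx0 hcor hn1
  have hδS : g (α + o₁) lam ≠ ⊥ := g_congr rfl (add_zero lam) hup
  have hδΔ := rootOf H hδS
  have hδ0 : α + o₁ ≠ 0 := by
    intro h0
    have ho₁eq : o₁ = -α := by
      have : α + o₁ - α = 0 - α := by rw [h0]
      simpa using this
    apply hshort
    rw [← lenNeg H hαΔ hα0, ← ho₁eq, hoB₁]
  obtain ⟨c, hc1, hcB⟩ := H.hβshort α hαΔ hα0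
  obtain ⟨cδ, hcδ1, hcδB⟩ := H.hβshort (α + o₁) hδΔ hδ0
  have K1 : B (α + o₁) (α + o₁) * R.coroot (α + o₁) o₁
      = B β β * (R.coroot o₁ α + 2) := by
    have h := star H hδΔ hδ0 hoΔ₁ ho0₁
    rw [hoB₁, map_add, coroot_self H hoΔ₁ ho0₁] at h
    exact h
  have K2 : B β β * R.coroot o₁ α = B α α * (z₁ : k) := by
    have h := star H hoΔ₁ ho0₁ hαΔ hα0
    rw [hoB₁, hz₁] at h
    exact h
  have K3 : B (α + o₁) (α + o₁) * R.coroot (α + o₁) α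
      = B α α * ((z₁ : k) + 2) := by
    have h := star H hδΔ hδ0 hαΔ hα0
    rw [map_add, coroot_self H hαΔ hα0, hz₁] at h
    rw [h]; ring
  have K0 : R.coroot (α + o₁) α + R.coroot (α + o₁) o₁ = 2 := by
    rw [← map_add]; exact coroot_self H hδΔ hδ0
  have hcomb : B (α + o₁) (α + o₁) * 2
      = 2 * B β β + B α α * (2 * (z₁ : k) + 2) := by
    calc B (α + o₁) (α + o₁) * 2
        = B (α + o₁) (α + o₁) * R.coroot (α + o₁) α
          + B (α + o₁) (α + o₁) * R.coroot (α + o₁) o₁ := by rw [← mul_add, K0]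
      _ = B α α * ((z₁ : k) + 2) + (B β β * R.coroot o₁ α + 2 * B β β) := by
          rw [K3, K1]; ring
      _ = B α α * ((z₁ : k) + 2) + (B α α * (z₁ : k) + 2 * B β β) := by rw [K2]
      _ = 2 * B β β + B α α * (2 * (z₁ : k) + 2) := by ring
  have hQ : (2 * cδ : ℚ) = 2 + c * (2 * (z₁ : ℚ) + 2) := by
    apply ratEq H
    push_cast
    calc (2 : k) * (cδ : k) * B β β = ((cδ : k) * B β β) * 2 := by ring
      _ = 2 * B β β + B α α * (2 * (z₁ : k) + 2) := by rw [← hcδB, hcomb]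
      _ = (2 + (c : k) * (2 * (z₁ : k) + 2)) * B β β := by rw [hcB]; ring
  have hzQ : (z₁ : ℚ) ≤ -1 := by
    have h1 : z₁ ≤ -1 := by omega
    exact_mod_cast h1
  have hz₁eq : (z₁ : ℚ) = -1 := by nlinarith
  have hcδeq : cδ = 1 := by rw [hz₁eq] at hQ; linarith
  refine ⟨α + o₁, hδΔ, hδ0, ?_, hδS⟩
  rw [hcδB, hcδeq]
  norm_num

/-- Transfer of `lam` between non-orthogonal minimal-length roots (positive pairing case). -/
lemma shortTransferPos (H : Ctx R g B β) {s t : 𝒳} {lam : Λ}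
    (hsΔ : s ∈ R.Δ) (hs0 : s ≠ 0) (hsB : B s s = B β β)
    (htΔ : t ∈ R.Δ) (ht0 : t ≠ 0) (htB : B t t = B β β)
    (hst : s ≠ t) {n : ℕ} (hn1 : 1 ≤ n) (hz : R.coroot t s = (n : k))
    (hS : g s lam ≠ ⊥) : g t lam ≠ ⊥ := by
  have hst' : R.coroot s t = (n : k) := by
    have h := star H hsΔ hs0 htΔ ht0
    rw [hsB, htB, hz] at h
    exact mul_left_cancel₀ (H.hBne β H.hβΔ H.hβ0) h
  obtain ⟨x, hx, hx0⟩ := (Submodule.ne_bot_iff _).1 hS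
  have hdown := moveDownOne H ht0 (short_zero_mem H htΔ ht0 htB) hx hx0 hz hn1
  have hd : g (s - t) lam ≠ ⊥ := g_congr (by abel) (by simp) hdown
  have hdΔ := rootOf H hd
  have hd0 : s - t ≠ 0 := sub_ne_zero.2 hst
  have K1 : B (s - t) (s - t) * R.coroot (s - t) s = B β β * (2 - (n : k)) := by
    have h := star H hdΔ hd0 hsΔ hs0
    rw [hsB, map_sub, coroot_self H hsΔ hs0, hst'] at h
    exact h
  have K2 : B (s - t) (s - t) * R.coroot (s - t) t = B β β * ((n : k) - 2) := by
    have h := star H hdΔ hd0 htΔ ht0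
    rw [htB, map_sub, hz, coroot_self H htΔ ht0] at h
    exact h
  have K3 : R.coroot (s - t) s - R.coroot (s - t) t = 2 := by
    rw [← map_sub]; exact coroot_self H hdΔ hd0
  have hcomb : B (s - t) (s - t) * 2 = B β β * (4 - 2 * (n : k)) := by
    calc B (s - t) (s - t) * 2
        = B (s - t) (s - t) * R.coroot (s - t) s
          - B (s - t) (s - t) * R.coroot (s - t) t := by rw [← mul_sub, K3]
      _ = B β β * (2 - (n : k)) - B β β * ((n : k) - 2) := by rw [K1, K2]
      _ = B β β * (4 - 2 * (n : k)) := by ring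
  obtain ⟨cd, hcd1, hcdB⟩ := H.hβshort (s - t) hdΔ hd0
  have hQ : (2 * cd : ℚ) = 4 - 2 * (n : ℚ) := by
    apply ratEq H
    push_cast
    calc (2 : k) * (cd : k) * B β β = ((cd : k) * B β β) * 2 := by ring
      _ = B β β * (4 - 2 * (n : k)) := by rw [← hcdB, hcomb]
      _ = (4 - 2 * (n : k)) * B β β := by ring
  have hnQ : (1 : ℚ) ≤ (n : ℚ) := by exact_mod_cast hn1
  have hn1' : (n : ℚ) = 1 := by linarith
  have hcdeq : cd = 1 := by rw [hn1'] at hQ; linarith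
  have hdB : B (s - t) (s - t) = B β β := by rw [hcdB, hcdeq]; norm_num
  have hn1n : n = 1 := by exact_mod_cast hn1'
  have hu : R.coroot (s - t) s = 1 := by
    have h := K1
    rw [hdB, hn1n] at h
    have h2 : B β β * R.coroot (s - t) s = B β β * 1 := by rw [h]; norm_num
    exact mul_left_cancel₀ (H.hBne β H.hβΔ H.hβ0) h2
  have hw := weyl H hdΔ hd0 hS
  refine g_congr ?_ rfl hw
  rw [hu, one_smul, sub_sub_cancel]

/-- Transfer of `lam` between non-orthogonal minimal-length roots. -/
lemma shortTransfer (H : Ctx R g B β) {s t : 𝒳} {lam : Λ}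
    (hsΔ : s ∈ R.Δ) (hs0 : s ≠ 0) (hsB : B s s = B β β)
    (htΔ : t ∈ R.Δ) (ht0 : t ≠ 0) (htB : B t t = B β β)
    (hne : R.coroot t s ≠ 0) (hS : g s lam ≠ ⊥) : g t lam ≠ ⊥ := by
  obtain ⟨z, hz⟩ := R.pairing_int t htΔ ht0 s hsΔ
  have hz0 : z ≠ 0 := by rintro rfl; apply hne; rw [hz]; norm_num
  by_cases hst : s = t
  · rwa [hst] at hS
  rcases lt_or_gt_of_ne hz0 with hneg | hpos
  · -- use -s
    by_cases hsnt : s = -t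
    · have h1 := negSelf H hs0 hS
      rwa [hsnt, neg_neg] at h1
    have hS' : g (-s) lam ≠ ⊥ := negSelf H hs0 hS
    have hsΔ' : -s ∈ R.Δ := negRootMem H hsΔ hs0
    have hs0' : -s ≠ 0 := neg_ne_zero.2 hs0
    have hsB' : B (-s) (-s) = B β β := by rw [lenNeg H hsΔ hs0, hsB]
    have hst'' : -s ≠ t := fun h => hsnt (by rw [← h, neg_neg])
    have hcor : R.coroot t (-s) = (((-z).toNat : ℕ) : k) := by
      rw [map_neg, hz]
      have h1 : ((-z).toNat : ℤ) = -z := Int.toNat_of_nonneg (by omega)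
      have h2 : (((-z).toNat : ℕ) : k) = ((-z : ℤ) : k) := by
        exact_mod_cast congrArg (fun w : ℤ => (w : k)) h1
      rw [h2]; push_cast; ring
    exact shortTransferPos H hsΔ' hs0' hsB' htΔ ht0 htB hst''
      (by omega : 1 ≤ (-z).toNat) hcor hS'
  · have hcor : R.coroot t s = ((z.toNat : ℕ) : k) := by
      rw [hz]
      have h1 : (z.toNat : ℤ) = z := Int.toNat_of_nonneg (by omega)
      rw [show ((z.toNat : ℕ) : k) = ((z : ℤ) : k) from by
        exact_mod_cast congrArg (fun w : ℤ => (w : k)) h1]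
    exact shortTransferPos H hsΔ hs0 hsB htΔ ht0 htB hst
      (by omega : 1 ≤ z.toNat) hcor hS

/-- Main lemma: every `lam` supported at a nonzero root is supported at `β`. -/
lemma mainA (H : Ctx R g B β) {α : 𝒳} {lam : Λ} (hα0 : α ≠ 0) (hS : g α lam ≠ ⊥) :
    g β lam ≠ ⊥ := by
  obtain ⟨s, hsΔ, hs0, hsB, hSs⟩ := toShort H hα0 hS
  obtain ⟨o, ho, hno⟩ := nonorth H hsΔ hs0
  obtain ⟨hoΔ, ho0, hoB⟩ := orbit_props H ho
  have hos : R.coroot o s ≠ 0 := by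
    intro h
    apply hno
    have hstar := star H hsΔ hs0 hoΔ ho0
    rw [h, mul_zero] at hstar
    exact (mul_eq_zero.1 hstar).resolve_left (by rw [hsB]; exact H.hBne β H.hβΔ H.hβ0)
  have hSo : g o lam ≠ ⊥ := shortTransfer H hsΔ hs0 hsB hoΔ ho0 hoB hos hSs
  exact orbit_back H ho lam hSo

lemma lamZero (H : Ctx R g B β) : g β (0 : Λ) ≠ ⊥ :=
  short_zero_mem H H.hβΔ H.hβ0 rfl

lemma addMem0 (H : Ctx R g B β) {a b : Λ} (ha : g β a ≠ ⊥) (hb : g β b ≠ ⊥) :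
    g (0 : 𝒳) (a + b) ≠ ⊥ := by
  have hb' : g β (-b) ≠ ⊥ := lamNeg H hb
  obtain ⟨x, hx, hx0⟩ := (Submodule.ne_bot_iff _).1 ha
  have hz : R.coroot β β = ((2 : ℕ) : k) := by
    rw [coroot_self H H.hβΔ H.hβ0]; norm_num
  have h := moveDownOne H H.hβ0 hb' hx hx0 hz (by norm_num)
  exact g_congr (neg_add_cancel β) (by abel) h

lemma lamAdd2 (H : Ctx R g B β) {lam b : Λ} (hl : g β lam ≠ ⊥) (hb : g β b ≠ ⊥) :
    g β (lam + (b + b)) ≠ ⊥ := by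
  have hb' : g β (-b) ≠ ⊥ := lamNeg H hb
  obtain ⟨x, hx, hx0⟩ := (Submodule.ne_bot_iff _).1 (neg_mem H H.hβ0 hl)
  have hz : R.coroot β (-β) = -((2 : ℕ) : k) := by
    rw [map_neg, coroot_self H H.hβΔ H.hβ0]; norm_num
  have h := moveUpFull H H.hβ0 hb' hx hx0 (n := 2) hz
  have h2 : g β (-(lam + (b + b))) ≠ ⊥ := g_congr (by abel) (by abel) h
  exact g_congr rfl (neg_neg _) (lamNeg H h2)

lemma zeroDecomp (H : Ctx R g B β) {lam : Λ} (hl : g (0 : 𝒳) lam ≠ ⊥) :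
    ∃ a b : Λ, g β a ≠ ⊥ ∧ g β b ≠ ⊥ ∧ lam = a + b := by
  classical
  by_contra hcon
  push_neg at hcon
  set S1 : Set L := ⋃ (γ : 𝒳) (_ : γ ≠ 0) (μ : Λ), ((g γ μ : Submodule k L) : Set L) with hS1
  set S2 : Set L := {w | ∃ γ : 𝒳, ∃ μ ν : Λ, ∃ y z : L,
      γ ≠ 0 ∧ y ∈ g γ μ ∧ z ∈ g (-γ) ν ∧ w = ⁅y, z⁆} with hS2
  set K : Submodule k L := Submodule.span k (S1 ∪ S2) with hK
  have hS1sub : ∀ {γ : 𝒳} {μ : Λ} {y : L}, γ ≠ 0 → y ∈ g γ μ → y ∈ S1 := by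
    intro γ μ y hγ hy
    rw [hS1]
    exact Set.mem_iUnion.2 ⟨γ, Set.mem_iUnion.2 ⟨hγ, Set.mem_iUnion.2 ⟨μ, hy⟩⟩⟩
  have hS2mem : ∀ {γ : 𝒳} {μ ν : Λ} {y z : L}, γ ≠ 0 → y ∈ g γ μ → z ∈ g (-γ) ν →
      (⁅y, z⁆ : L) ∈ g (0 : 𝒳) (μ + ν) := by
    intro γ μ ν y z hγ hy hz
    have := H.hLT.bracket_mem γ (-γ) μ ν y hy z hz
    rwa [add_neg_cancel] at this
  have hbr : ∀ u ∈ K, ∀ v ∈ K, ⁅u, v⁆ ∈ K := by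
    intro u hu
    induction hu using Submodule.span_induction with
    | mem w hw =>
      intro v hv
      induction hv using Submodule.span_induction with
      | mem v' hv' =>
        rcases hw with hw | hw
        · -- w ∈ S1
          rw [hS1] at hw
          obtain ⟨γ, hw⟩ := Set.mem_iUnion.1 hw
          obtain ⟨hγ0, hw⟩ := Set.mem_iUnion.1 hw
          obtain ⟨μ, hw⟩ := Set.mem_iUnion.1 hw
          rcases hv' with hv' | hv'
          · rw [hS1] at hv'
            obtain ⟨γ', hv'⟩ := Set.mem_iUnion.1 hv'
            obtain ⟨hγ'0, hv'⟩ := Set.mem_iUnion.1 hv'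
            obtain ⟨μ', hv'⟩ := Set.mem_iUnion.1 hv'
            by_cases hsum : γ' = -γ
            · subst hsum
              exact Submodule.subset_span (Or.inr ⟨γ, μ, μ', w, v', hγ0, hw, hv', rfl⟩)
            · have hne : γ + γ' ≠ 0 := fun h =>
                hsum (by rwa [add_comm, add_eq_zero_iff_eq_neg] at h)
              exact Submodule.subset_span
                (Or.inl (hS1sub hne (H.hLT.bracket_mem γ γ' μ μ' w hw v' hv')))
          · obtain ⟨γ₂, μ₂, ν₂, y₂, z₂, hγ₂0, hy₂, hz₂, rfl⟩ := hv'
            have hv0 : (⁅y₂, z₂⁆ : L) ∈ g (0 : 𝒳) (μ₂ + ν₂) := hS2mem hγ₂0 hy₂ hz₂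
            have hbm := H.hLT.bracket_mem γ 0 μ (μ₂ + ν₂) w hw _ hv0
            rw [add_zero] at hbm
            exact Submodule.subset_span (Or.inl (hS1sub hγ0 hbm))
        · -- w ∈ S2
          obtain ⟨γ₁, μ₁, ν₁, y₁, z₁, hγ₁0, hy₁, hz₁, rfl⟩ := hw
          have hw0 : (⁅y₁, z₁⁆ : L) ∈ g (0 : 𝒳) (μ₁ + ν₁) := hS2mem hγ₁0 hy₁ hz₁
          rcases hv' with hv' | hv'
          · rw [hS1] at hv'
            obtain ⟨γ', hv'⟩ := Set.mem_iUnion.1 hv'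
            obtain ⟨hγ'0, hv'⟩ := Set.mem_iUnion.1 hv'
            obtain ⟨μ', hv'⟩ := Set.mem_iUnion.1 hv'
            have hbm := H.hLT.bracket_mem 0 γ' (μ₁ + ν₁) μ' _ hw0 v' hv'
            rw [zero_add] at hbm
            exact Submodule.subset_span (Or.inl (hS1sub hγ'0 hbm))
          · obtain ⟨γ₂, μ₂, ν₂, y₂, z₂, hγ₂0, hy₂, hz₂, rfl⟩ := hv'
            have hleib : (⁅⁅y₁, z₁⁆, ⁅y₂, z₂⁆⁆ : L)
                = ⁅⁅⁅y₁, z₁⁆, y₂⁆, z₂⁆ + ⁅y₂, ⁅⁅y₁, z₁⁆, z₂⁆⁆ := leibniz_lie _ _ _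
            rw [hleib]
            apply K.add_mem
            · have ht1 := H.hLT.bracket_mem 0 γ₂ (μ₁ + ν₁) μ₂ _ hw0 y₂ hy₂
              rw [zero_add] at ht1
              exact Submodule.subset_span
                (Or.inr ⟨γ₂, _, ν₂, _, z₂, hγ₂0, ht1, hz₂, rfl⟩)
            · have ht2 := H.hLT.bracket_mem 0 (-γ₂) (μ₁ + ν₁) ν₂ _ hw0 z₂ hz₂
              rw [zero_add] at ht2
              exact Submodule.subset_span
                (Or.inr ⟨γ₂, μ₂, _, y₂, _, hγ₂0, hy₂, ht2, rfl⟩)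
      | zero => rw [lie_zero]; exact K.zero_mem
      | add v1 v2 h1 h2 ih1 ih2 => rw [lie_add]; exact K.add_mem ih1 ih2
      | smul c v1 h1 ih1 => rw [lie_smul]; exact K.smul_mem c ih1
    | zero => intro v hv; rw [zero_lie]; exact K.zero_mem
    | add u1 u2 h1 h2 ih1 ih2 => intro v hv; rw [add_lie]; exact K.add_mem (ih1 v hv) (ih2 v hv)
    | smul c u1 h1 ih1 => intro v hv; rw [smul_lie]; exact K.smul_mem c (ih1 v hv)
  have hKtop : ∀ x : L, x ∈ K := by
    have h1 : LieSubalgebra.lieSpan k L (⋃ α ∈ R.Δ \ {0}, ⋃ lam : Λ, (g α lam : Set L))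
        ≤ ({ toSubmodule := K, lie_mem' := fun {x y} hx hy => hbr x hx y hy } :
            LieSubalgebra k L) := by
      apply LieSubalgebra.lieSpan_le.2
      intro y hy
      obtain ⟨α, hy⟩ := Set.mem_iUnion.1 hy
      obtain ⟨hα, hy⟩ := Set.mem_iUnion.1 hy
      obtain ⟨lam', hy⟩ := Set.mem_iUnion.1 hy
      have hα0 : α ≠ 0 := fun h => hα.2 (by rw [h]; rfl)
      exact Submodule.subset_span (Or.inl (hS1sub hα0 hy))
    intro x
    have h2 : x ∈ LieSubalgebra.lieSpan k L
        (⋃ α ∈ R.Δ \ {0}, ⋃ lam : Λ, (g α lam : Set L)) := by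
      rw [H.hLT.lt3]; trivial
    exact h1 h2
  set W : Submodule k L := Submodule.span k {w | ∃ γ : 𝒳, ∃ μ ν : Λ, ∃ y z : L,
      γ ≠ 0 ∧ y ∈ g γ μ ∧ z ∈ g (-γ) ν ∧ μ + ν = lam ∧ w = ⁅y, z⁆} with hW
  set V : Submodule k L := ⨆ p ∈ {q : 𝒳 × Λ | q ≠ ((0 : 𝒳), lam)}, g p.1 p.2 with hV
  have hVmem : ∀ {γ : 𝒳} {μ : Λ} {y : L}, y ∈ g γ μ → (γ, μ) ≠ ((0 : 𝒳), lam) → y ∈ V := by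
    intro γ μ y hy hne
    rw [hV]
    exact Submodule.mem_iSup_of_mem (γ, μ) (Submodule.mem_iSup_of_mem hne hy)
  have hKWV : K ≤ W ⊔ V := by
    rw [hK]
    apply Submodule.span_le.2
    rintro w (hw | hw)
    · rw [hS1] at hw
      obtain ⟨γ, hw⟩ := Set.mem_iUnion.1 hw
      obtain ⟨hγ0, hw⟩ := Set.mem_iUnion.1 hw
      obtain ⟨μ, hw⟩ := Set.mem_iUnion.1 hw
      exact Submodule.mem_sup_right (hVmem hw (fun h => hγ0 (congrArg Prod.fst h)))
    · obtain ⟨γ, μ, ν, y, z, hγ0, hy, hz, rfl⟩ := hw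
      by_cases hμν : μ + ν = lam
      · exact Submodule.mem_sup_left
          (Submodule.subset_span ⟨γ, μ, ν, y, z, hγ0, hy, hz, hμν, rfl⟩)
      · exact Submodule.mem_sup_right
          (hVmem (hS2mem hγ0 hy hz) (fun h => hμν (congrArg Prod.snd h)))
  have hWle : W ≤ g (0 : 𝒳) lam := by
    rw [hW]
    apply Submodule.span_le.2
    rintro w ⟨γ, μ, ν, y, z, hγ0, hy, hz, hμν, rfl⟩
    have := hS2mem hγ0 hy hz
    rwa [hμν] at this
  obtain ⟨x, hx, hx0⟩ := (Submodule.ne_bot_iff _).1 hl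
  obtain ⟨w, hw, v, hv, hwv⟩ := Submodule.mem_sup.1 (hKWV (hKtop x))
  have hvg : v ∈ g (0 : 𝒳) lam := by
    have hveq : v = x - w := by rw [← hwv]; abel
    rw [hveq]
    exact Submodule.sub_mem _ hx (hWle hw)
  have hdisj : Disjoint (g (0 : 𝒳) lam) V := by
    have hind := H.hLT.isInternal.submodule_iSupIndep
    have := hind.disjoint_biSup
      (x := ((0 : 𝒳), lam)) (y := {q : 𝒳 × Λ | q ≠ ((0 : 𝒳), lam)}) (by simp)
    rwa [hV]
  have hv0 : v = 0 := by
    have : v ∈ (⊥ : Submodule k L) := hdisj.le_bot (Submodule.mem_inf.2 ⟨hvg, hv⟩)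
    simpa using this
  have hxw : x = w := by rw [← hwv, hv0, add_zero]
  have hgen0 : {w : L | ∃ γ : 𝒳, ∃ μ ν : Λ, ∃ y z : L,
      γ ≠ 0 ∧ y ∈ g γ μ ∧ z ∈ g (-γ) ν ∧ μ + ν = lam ∧ w = ⁅y, z⁆} ⊆ {(0 : L)} := by
    rintro w ⟨γ, μ, ν, y, z, hγ0, hy, hz, hμν, rfl⟩
    by_cases hy0 : y = 0
    · simp [hy0]
    by_cases hz0 : z = 0
    · simp [hz0]
    exfalso
    have h1 : g β μ ≠ ⊥ := mainA H hγ0 (ne_bot_of_mem hy hy0)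
    have h2 : g β ν ≠ ⊥ := mainA H (neg_ne_zero.2 hγ0) (ne_bot_of_mem hz hz0)
    exact hcon μ ν h1 h2 hμν.symm
  have hWbot : W ≤ ⊥ := by
    rw [hW]
    apply Submodule.span_le.2
    intro w hw
    have := hgen0 hw
    simp only [Set.mem_singleton_iff] at this
    simp [this]
  apply hx0
  have : x ∈ (⊥ : Submodule k L) := hWbot (hxw ▸ hw)
  simpa using this

end LT19

/-- For a short root `β` of `Δ` (shortness is expressed via an invariant symmetric form `B`
compatible with the coroots: every root length ratio `B α α / B β β` is a rational `≥ 1`),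
the Lie torus `L` satisfies `supp_Λ(L) = Λ_0 = Λ_β + Λ_β`, `Λ = ⟨Λ_β⟩`,
`Λ_β + 2Λ ⊆ Λ_β`, `2Λ ⊆ Λ_β`, and in particular `2Λ ⊆ supp_Λ(L)`. -/
theorem stmt19 {k 𝒳 Λ L : Type*} [Field k] [CharZero k] [AddCommGroup 𝒳] [Module k 𝒳]
    [DecidableEq 𝒳] [AddCommGroup Λ] [DecidableEq Λ] [LieRing L] [LieAlgebra k L]
    (R : RootSystemIn k 𝒳) (g : 𝒳 → Λ → Submodule k L) (hLT : IsLieTorus R g)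
    (B : 𝒳 → 𝒳 → k)
    (hBsym : ∀ x y : 𝒳, B x y = B y x)
    (hBne : ∀ α ∈ R.Δ, α ≠ 0 → B α α ≠ 0)
    (hBcoroot : ∀ α ∈ R.Δ, α ≠ 0 → ∀ x : 𝒳, B α α * R.coroot α x = 2 * B x α)
    (β : 𝒳) (hβΔ : β ∈ R.Δ) (hβ0 : β ≠ 0)
    (hβshort : ∀ α ∈ R.Δ, α ≠ 0 → ∃ c : ℚ, 1 ≤ c ∧ B α α = (c : k) * B β β) :
    ({lam : Λ | ∃ α : 𝒳, g α lam ≠ ⊥} = {lam : Λ | g 0 lam ≠ ⊥}) ∧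
    ({lam : Λ | g 0 lam ≠ ⊥} =
      {lam : Λ | ∃ a b : Λ, g β a ≠ ⊥ ∧ g β b ≠ ⊥ ∧ lam = a + b}) ∧
    (AddSubgroup.closure {lam : Λ | g β lam ≠ ⊥} = ⊤) ∧
    (∀ lam : Λ, g β lam ≠ ⊥ → ∀ mu : Λ, g β (lam + (mu + mu)) ≠ ⊥) ∧
    (∀ mu : Λ, g β (mu + mu) ≠ ⊥) ∧
    (∀ mu : Λ, ∃ α : 𝒳, g α (mu + mu) ≠ ⊥) := by
  have H : LT19.Ctx R g B β := ⟨hLT, hBsym, hBne, hBcoroot, hβΔ, hβ0, hβshort⟩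
  have c1 : {lam : Λ | ∃ α : 𝒳, g α lam ≠ ⊥} = {lam : Λ | g 0 lam ≠ ⊥} := by
    ext lam
    constructor
    · rintro ⟨α, hS⟩
      by_cases hα0 : α = 0
      · rwa [hα0] at hS
      · have hβlam := LT19.mainA H hα0 hS
        have h := LT19.addMem0 H hβlam (LT19.lamZero H)
        exact LT19.g_congr rfl (add_zero lam) h
    · exact fun hl => ⟨0, hl⟩
  have c2 : {lam : Λ | g (0 : 𝒳) lam ≠ ⊥} =
      {lam : Λ | ∃ a b : Λ, g β a ≠ ⊥ ∧ g β b ≠ ⊥ ∧ lam = a + b} := by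
    ext lam
    constructor
    · exact fun hl => LT19.zeroDecomp H hl
    · rintro ⟨a, b, ha, hb, rfl⟩
      exact LT19.addMem0 H ha hb
  have c3 : AddSubgroup.closure {lam : Λ | g β lam ≠ ⊥} = ⊤ := by
    have hsub : {lam : Λ | ∃ α : 𝒳, g α lam ≠ ⊥} ⊆
        (AddSubgroup.closure {lam : Λ | g β lam ≠ ⊥} : AddSubgroup Λ) := by
      rintro lam ⟨α, hS⟩
      by_cases hα0 : α = 0
      · rw [hα0] at hS
        obtain ⟨a, b, ha, hb, rfl⟩ := LT19.zeroDecomp H hS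
        exact add_mem (AddSubgroup.subset_closure ha) (AddSubgroup.subset_closure hb)
      · exact AddSubgroup.subset_closure (LT19.mainA H hα0 hS)
    have hle := (AddSubgroup.closure_le _).2 hsub
    rw [hLT.lt4] at hle
    exact eq_top_iff.2 hle
  have c4 : ∀ lam : Λ, g β lam ≠ ⊥ → ∀ mu : Λ, g β (lam + (mu + mu)) ≠ ⊥ := by
    set Hgrp : AddSubgroup Λ :=
      { carrier := {mu : Λ | ∀ lam : Λ, g β lam ≠ ⊥ → g β (lam + (mu + mu)) ≠ ⊥}
        zero_mem' := fun lam hl => LT19.g_congr rfl (by abel) hl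
        add_mem' := by
          intro a b ha hb lam hl
          have h1 := ha lam hl
          have h2 := hb _ h1
          exact LT19.g_congr rfl (by abel) h2
        neg_mem' := by
          intro a ha lam hl
          have h1 := LT19.lamNeg H hl
          have h2 := ha _ h1
          have h3 := LT19.lamNeg H h2
          exact LT19.g_congr rfl (by abel) h3 } with hHgrp
    have hle : AddSubgroup.closure {lam : Λ | g β lam ≠ ⊥} ≤ Hgrp :=
      (AddSubgroup.closure_le _).2 (fun b hb lam hl => LT19.lamAdd2 H hl hb)
    rw [c3] at hle
    intro lam hl mu
    exact hle (Set.mem_univ mu : mu ∈ (⊤ : AddSubgroup Λ)) lam hl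
  have c5 : ∀ mu : Λ, g β (mu + mu) ≠ ⊥ := fun mu =>
    LT19.g_congr rfl (zero_add _) (c4 0 (LT19.lamZero H) mu)
  exact ⟨c1, c2, c3, c4, c5, fun mu => ⟨β, c5 mu⟩⟩
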